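/- (Primal–dual witness lemma for ℓ₁-penalized minimization.) Let p ≥ 1, f : ℝ^p → ℝ, λ > 0, S ⊆ {1,…,p}, and let θ̃ ∈ ℝ^p with θ̃_t = 0 for all t ∉ S. Suppose there exist g, z ∈ ℝ^p such that: (i) f(θ) ≥ f(θ̃) + ⟨g, θ − θ̃⟩ for all θ ∈ ℝ^p (g is a subgradient of f at θ̃); (ii) g + λ·z = 0; (iii) |z_t| ≤ 1 and z_t·θ̃_t = |θ̃_t| for all t; and (iv) |z_t| < 1 for all t ∉ S. Then θ̃ minimizes F(θ) := f(θ) + λ·Σ_t |θ_t| over ℝ^p, and every minimizer θ̂ of F satisfies θ̂_t = 0 for all t ∉ S. -/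

import Mathlib

/-- **primal–dual witness lemma for ℓ₁-penalized minimization.** If `θ̃` is
supported on `S`, `g` is a subgradient of `f` at `θ̃`, the stationarity condition
`g + λ·z = 0` holds with `z` a subgradient of the ℓ₁-norm at `θ̃` (`|z_t| ≤ 1`,
`z_t·θ̃_t = |θ̃_t|`) that is strictly dual feasible off `S` (`|z_t| < 1` for `t ∉ S`), then `θ̃`
minimizes `F(θ) = f(θ) + λ·‖θ‖₁` and every minimizer of `F` vanishes off `S`. -/
theorem primal_dual_witness_l1
    (p : ℕ) (hp : 1 ≤ p)
    (f : (Fin p → ℝ) → ℝ) (lam : ℝ) (hlam : 0 < lam)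
    (S : Finset (Fin p))
    (θt : Fin p → ℝ) (hθt : ∀ t ∉ S, θt t = 0)
    (g z : Fin p → ℝ)
    (hsub : ∀ θ : Fin p → ℝ, f θt + ∑ i, g i * (θ i - θt i) ≤ f θ)
    (hstat : ∀ i, g i + lam * z i = 0)
    (hz1 : ∀ t, |z t| ≤ 1)
    (hz2 : ∀ t, z t * θt t = |θt t|)
    (hz3 : ∀ t ∉ S, |z t| < 1) :
    (∀ θ : Fin p → ℝ, f θt + lam * ∑ i, |θt i| ≤ f θ + lam * ∑ i, |θ i|) ∧
    (∀ θh : Fin p → ℝ,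
      (∀ θ : Fin p → ℝ, f θh + lam * ∑ i, |θh i| ≤ f θ + lam * ∑ i, |θ i|) →
      ∀ t ∉ S, θh t = 0) := by
  have hg : ∀ i, g i = -(lam * z i) := fun i => by have := hstat i; linarith
  -- nonnegativity of each slack term
  have hterm : ∀ (θ : Fin p → ℝ) i, 0 ≤ |θ i| - z i * θ i := by
    intro θ i
    have h1 : z i * θ i ≤ |z i * θ i| := le_abs_self _
    have h2 : |z i * θ i| = |z i| * |θ i| := abs_mul _ _
    have h3 : |z i| * |θ i| ≤ 1 * |θ i| :=
      mul_le_mul_of_nonneg_right (hz1 i) (abs_nonneg _)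
    nlinarith
  -- key inequality
  have key : ∀ θ : Fin p → ℝ,
      f θt + lam * ∑ i, |θt i| + lam * ∑ i, (|θ i| - z i * θ i)
        ≤ f θ + lam * ∑ i, |θ i| := by
    intro θ
    have h := hsub θ
    have hsum : ∑ i, g i * (θ i - θt i)
        = -(lam * ∑ i, z i * θ i) + lam * ∑ i, |θt i| := by
      rw [← Finset.sum_congr rfl (fun i _ => (hz2 i))]
      rw [Finset.mul_sum, Finset.mul_sum, ← Finset.sum_neg_distrib,
        ← Finset.sum_add_distrib]
      refine Finset.sum_congr rfl fun i _ => ?_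
      rw [hg i]; ring
    rw [hsum] at h
    have hsd : ∑ i, (|θ i| - z i * θ i) = (∑ i, |θ i|) - ∑ i, z i * θ i :=
      Finset.sum_sub_distrib _ _
    rw [hsd]
    nlinarith
  constructor
  · intro θ
    have hz : 0 ≤ lam * ∑ i, (|θ i| - z i * θ i) :=
      mul_nonneg hlam.le (Finset.sum_nonneg fun i _ => hterm θ i)
    have := key θ
    linarith
  · intro θh hmin t ht
    have h1 := key θh
    have h2 := hmin θt
    have hle : lam * ∑ i, (|θh i| - z i * θh i) ≤ 0 := by linarith
    have hsnn : 0 ≤ ∑ i, (|θh i| - z i * θh i) :=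
      Finset.sum_nonneg fun i _ => hterm θh i
    have hs0 : ∑ i, (|θh i| - z i * θh i) = 0 := by nlinarith
    have hall := (Finset.sum_eq_zero_iff_of_nonneg (fun i _ => hterm θh i)).mp hs0
    have ht0 : |θh t| - z t * θh t = 0 := hall t (Finset.mem_univ t)
    by_contra hne
    have hpos : 0 < |θh t| := abs_pos.mpr hne
    have : z t * θh t ≤ |z t| * |θh t| := by
      calc z t * θh t ≤ |z t * θh t| := le_abs_self _
        _ = |z t| * |θh t| := abs_mul _ _
    have hlt : |z t| * |θh t| < 1 * |θh t| :=
      mul_lt_mul_of_pos_right (hz3 t ht) hpos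
    nlinarith
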